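/- Let (G,c) be a W-state graph on n vertices and let G_m be the spanning subgraph consisting of all monochromatic edges. Then the maximum matching in G_m has size exactly n/2 - 1. -/

import Mathlib

/-! Multigraphs (parallel edges allowed, no loops) with half-edge 2-colourings,
    matchings, W-state graphs and W-cones, following the paper. -/

structure Multigraph (V E : Type) where
  fst : E → V
  snd : E → V
  no_loop : ∀ e, fst e ≠ snd e

namespace Multigraph

variable {V E : Type} (G : Multigraph V E)

/-- Edge `e` is incident with vertex `v`. -/
def Inc (e : E) (v : V) : Prop := G.fst e = v ∨ G.snd e = v

/-- Adjacency using only edges in the edge set `F`. -/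
def AdjIn (F : Set E) (u v : V) : Prop :=
  u ≠ v ∧ ∃ e ∈ F, G.Inc e u ∧ G.Inc e v

def Adj (u v : V) : Prop := G.AdjIn Set.univ u v

/-- Reachability inside the vertex set `S`, using only edges in `F`. -/
def ReachOn (F : Set E) (S : Set V) (u v : V) : Prop :=
  Relation.ReflTransGen (fun a b => a ∈ S ∧ b ∈ S ∧ G.AdjIn F a b) u v

/-- The subgraph with edge set `F` induced on the vertex set `S` is connected. -/
def ConnectedOn (F : Set E) (S : Set V) : Prop :=
  ∀ u ∈ S, ∀ v ∈ S, G.ReachOn F S u v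

def Connected : Prop := G.ConnectedOn Set.univ Set.univ

/-- `K` is a connected component of the subgraph with edge set `F` induced on `S`. -/
def IsCompOn (F : Set E) (S : Set V) (K : Set V) : Prop :=
  ∃ v ∈ S, K = {u | u ∈ S ∧ G.ReachOn F S u v}

def IsMatching (M : Set E) : Prop :=
  ∀ e ∈ M, ∀ f ∈ M, e ≠ f → ∀ v : V, ¬ (G.Inc e v ∧ G.Inc f v)

/-- `M` is a perfect matching of the subgraph of `G` induced on `S`. -/
def IsPerfectMatchingOn (S : Set V) (M : Set E) : Prop :=
  (∀ e ∈ M, G.fst e ∈ S ∧ G.snd e ∈ S) ∧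
  ∀ v ∈ S, ∃! e, e ∈ M ∧ G.Inc e v

def IsPerfectMatching (M : Set E) : Prop :=
  G.IsPerfectMatchingOn Set.univ M

/-- Every edge lies in some perfect matching. -/
def MatchingCovered : Prop :=
  ∀ e : E, ∃ M : Set E, G.IsPerfectMatching M ∧ e ∈ M

/-- The subgraph with edge set `F` induced on `K` is factor-critical. -/
def FactorCriticalOn (F : Set E) (K : Set V) : Prop :=
  ∀ v ∈ K, ∃ M : Set E, M ⊆ F ∧ G.IsPerfectMatchingOn (K \ {v}) M

def FactorCritical : Prop := G.FactorCriticalOn Set.univ Set.univ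

/-- `M` is a maximum matching among matchings using only edges in `F`. -/
def IsMaxMatchingIn (F M : Set E) : Prop :=
  M ⊆ F ∧ G.IsMatching M ∧
  ∀ N : Set E, N ⊆ F → G.IsMatching N → N.ncard ≤ M.ncard

/-- Half-edge 2-colourings are functions `c : E → V → Bool`
    (`true` = red, `false` = blue; only the values at endpoints matter). -/
def Bichromatic (c : E → V → Bool) (e : E) : Prop :=
  c e (G.fst e) ≠ c e (G.snd e)

/-- The monochromatic edges. -/
def MonoEdges (c : E → V → Bool) : Set E := {e | ¬ G.Bichromatic c e}

/-- Every vertex has an incident red half-edge. -/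
def VertexCond (c : E → V → Bool) : Prop :=
  ∀ v : V, ∃ e : E, G.Inc e v ∧ c e v = true

/-- Every perfect matching contains exactly one bichromatic edge. -/
def MatchingCond (c : E → V → Bool) : Prop :=
  ∀ M : Set E, G.IsPerfectMatching M → ∃! e, e ∈ M ∧ G.Bichromatic c e

/-- All monochromatic edges are blue. -/
def NoRedMono (c : E → V → Bool) : Prop :=
  ∀ e : E, ¬ G.Bichromatic c e → c e (G.fst e) = false

/-- W-state graph. -/
def IsWState (c : E → V → Bool) : Prop :=
  G.MatchingCovered ∧ G.MatchingCond c ∧ G.VertexCond c ∧ G.NoRedMono c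

def Universal (v : V) : Prop := ∀ u : V, u ≠ v → G.Adj u v

/-- W-cone with apex `v`. -/
def IsWConeWithApex (c : E → V → Bool) (v : V) : Prop :=
  G.MatchingCovered ∧ G.Universal v ∧
  (∀ e : E, G.Bichromatic c e ↔ G.Inc e v) ∧
  G.VertexCond c ∧ G.NoRedMono c

def IsWCone (c : E → V → Bool) : Prop := ∃ v : V, G.IsWConeWithApex c v

/-- `e` and `f` are parallel edges (same pair of endpoints). -/
def Parallel (e f : E) : Prop :=
  (G.fst e = G.fst f ∧ G.snd e = G.snd f) ∨
  (G.fst e = G.snd f ∧ G.snd e = G.fst f)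

/-- The cut `δ(X)`. -/
def CutEdges (X : Set V) : Set E :=
  {e | (G.fst e ∈ X ∧ G.snd e ∉ X) ∨ (G.fst e ∉ X ∧ G.snd e ∈ X)}

/-- `δ(X)` is a tight cut. -/
def IsTightCut (X : Set V) : Prop :=
  ∀ M : Set E, G.IsPerfectMatching M → ∃! e, e ∈ M ∧ e ∈ G.CutEdges X

def Bipartite : Prop :=
  ∃ f : V → Bool, ∀ e : E, f (G.fst e) ≠ f (G.snd e)

/-- A brick: non-bipartite matching-covered graph with no non-trivial tight cut. -/
def IsBrick : Prop :=
  G.MatchingCovered ∧ ¬ G.Bipartite ∧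
  ∀ X : Set V, 2 ≤ X.ncard → 2 ≤ (Set.univ \ X).ncard → ¬ G.IsTightCut X

end Multigraph

open Classical in
/-- The covered vertex set of a matching has cardinality `2 * M.ncard`. -/
lemma matching_cover_card {V E : Type} [Fintype V] [Fintype E] (G : Multigraph V E)
    {M : Set E} (hM : G.IsMatching M) :
    (M.toFinset.biUnion (fun e => ({G.fst e, G.snd e} : Finset V))).card = 2 * M.ncard := by
  rw [Finset.card_biUnion]
  · rw [Finset.sum_congr rfl (fun e _ => Finset.card_pair (G.no_loop e)),
      Finset.sum_const, smul_eq_mul, Set.ncard_eq_toFinset_card', mul_comm]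
  · intro e he f hf hef
    rw [Function.onFun, Finset.disjoint_left]
    intro v hv hv'
    simp only [Finset.mem_insert, Finset.mem_singleton] at hv hv'
    exact hM e (by simpa using he) f (by simpa using hf) hef v
      ⟨hv.imp Eq.symm Eq.symm, hv'.imp Eq.symm Eq.symm⟩

open Classical in
lemma matching_card_le {V E : Type} [Fintype V] [Fintype E] (G : Multigraph V E)
    {M : Set E} (hM : G.IsMatching M) : 2 * M.ncard ≤ Fintype.card V := by
  rw [← matching_cover_card G hM]
  exact Finset.card_le_card (Finset.subset_univ _) |>.trans_eq (Finset.card_univ)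

open Classical in
lemma pm_card {V E : Type} [Fintype V] [Fintype E] (G : Multigraph V E)
    {M : Set E} (hM : G.IsPerfectMatching M) : 2 * M.ncard = Fintype.card V := by
  have hmatch : G.IsMatching M := by
    intro e he f hf hef v ⟨hev, hfv⟩
    obtain ⟨_, huniq⟩ := (hM.2 v (Set.mem_univ v))
    exact hef (((hM.2 v (Set.mem_univ v)).unique ⟨he, hev⟩ ⟨hf, hfv⟩))
  rw [← matching_cover_card G hmatch, ← Finset.card_univ]
  congr 1
  apply Finset.eq_univ_iff_forall.mpr
  intro v
  obtain ⟨e, ⟨heM, hev⟩, _⟩ := hM.2 v (Set.mem_univ v)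
  simp only [Finset.mem_biUnion, Set.mem_toFinset, Finset.mem_insert, Finset.mem_singleton]
  exact ⟨e, heM, hev.imp Eq.symm Eq.symm⟩

open Classical in
/-- A matching covering all vertices is a perfect matching. -/
lemma matching_full_is_pm {V E : Type} [Fintype V] [Fintype E] (G : Multigraph V E)
    {M : Set E} (hM : G.IsMatching M) (hcard : 2 * M.ncard = Fintype.card V) :
    G.IsPerfectMatching M := by
  have hcov : (M.toFinset.biUnion (fun e => ({G.fst e, G.snd e} : Finset V))) = Finset.univ := by
    apply Finset.eq_univ_of_card
    rw [matching_cover_card G hM, hcard]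
  refine ⟨fun e _ => ⟨Set.mem_univ _, Set.mem_univ _⟩, fun v _ => ?_⟩
  have : v ∈ (M.toFinset.biUnion (fun e => ({G.fst e, G.snd e} : Finset V))) := by
    rw [hcov]; exact Finset.mem_univ v
  simp only [Finset.mem_biUnion, Set.mem_toFinset, Finset.mem_insert,
    Finset.mem_singleton] at this
  obtain ⟨e, heM, hev⟩ := this
  refine ⟨e, ⟨heM, hev.imp Eq.symm Eq.symm⟩, ?_⟩
  intro f ⟨hfM, hfv⟩
  by_contra hne
  exact hM f hfM e heM hne v ⟨hfv, hev.imp Eq.symm Eq.symm⟩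

/-- In a W-state graph on `n` vertices, the maximum matching of the
monochromatic subgraph `G_m` has size exactly `n/2 - 1`. -/
theorem stmt5 {V E : Type} [Fintype V] [Fintype E] (G : Multigraph V E)
    (c : E → V → Bool) (h : G.IsWState c) :
    (∃ M : Set E, M ⊆ G.MonoEdges c ∧ G.IsMatching M ∧
        M.ncard = Fintype.card V / 2 - 1) ∧
    (∀ M : Set E, M ⊆ G.MonoEdges c → G.IsMatching M →
        M.ncard ≤ Fintype.card V / 2 - 1) := by
  classical
  obtain ⟨hmc, hmcond, hvcond, hnored⟩ := h
  by_cases hV : Nonempty V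
  · -- get a perfect matching
    obtain ⟨v⟩ := hV
    obtain ⟨e, hev, -⟩ := hvcond v
    obtain ⟨M, hPM, heM⟩ := hmc e
    have hMmatch : G.IsMatching M := by
      intro a ha b hb hab w ⟨haw, hbw⟩
      exact hab ((hPM.2 w (Set.mem_univ w)).unique ⟨ha, haw⟩ ⟨hb, hbw⟩)
    have hcardM : 2 * M.ncard = Fintype.card V := pm_card G hPM
    have hMpos : 1 ≤ M.ncard := by
      exact (Set.ncard_pos (Set.toFinite M)).mpr ⟨e, heM⟩
    have hdiv : Fintype.card V / 2 = M.ncard := by omega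
    obtain ⟨e₀, ⟨he₀M, he₀bi⟩, he₀uniq⟩ := hmcond M hPM
    constructor
    · refine ⟨M \ {e₀}, ?_, ?_, ?_⟩
      · intro f ⟨hfM, hfne⟩ hbi
        exact hfne (he₀uniq f ⟨hfM, hbi⟩)
      · intro a ha b hb hab w hw
        exact hMmatch a ha.1 b hb.1 hab w hw
      · rw [Set.ncard_diff_singleton_of_mem he₀M, hdiv]
    · intro N hNmono hNmatch
      have hle : 2 * N.ncard ≤ Fintype.card V := matching_card_le G hNmatch
      by_contra hgt
      push_neg at hgt
      have hNcard : 2 * N.ncard = Fintype.card V := by omega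
      have hNpm := matching_full_is_pm G hNmatch hNcard
      obtain ⟨f, ⟨hfN, hfbi⟩, -⟩ := hmcond N hNpm
      exact hNmono hfN hfbi
  · -- V is empty, hence E is empty
    have hE : IsEmpty E := ⟨fun e => (hV ⟨G.fst e⟩)⟩
    have hcard : Fintype.card V = 0 := by
      simp [Fintype.card_eq_zero_iff.mpr (not_nonempty_iff.mp hV)]
    constructor
    · refine ⟨∅, by simp, by intro a ha; simp at ha, by simp [hcard]⟩
    · intro M _ _
      have : M = ∅ := Set.eq_empty_of_isEmpty M
      simp [this, hcard]
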